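/- Suppose x⁺ ∈ E is an ε-inexact proximal-gradient step from w̄ ∈ E with step size β > 0, and suppose β satisfies the majorization condition at (x⁺, w̄). Then for every x ∈ E one has f(x) − f(x⁺) ≥ (1/(2β)) · (‖x⁺ − x‖² − ‖w̄ − x‖² − ε²). -/

import Mathlib

open RealInnerProductSpace

/-- Gradient inequality for a convex differentiable function. -/
lemma convex_gradient_ineq {E : Type*} [NormedAddCommGroup E] [InnerProductSpace ℝ E]
    [CompleteSpace E] (L : E → ℝ) (g : E → E)
    (hconv : ConvexOn ℝ Set.univ L) (hg : ∀ x, HasGradientAt L (g x) x) (x y : E) :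
    L x + ⟪y - x, g x⟫ ≤ L y := by
  set φ : ℝ →ᵃ[ℝ] E := AffineMap.lineMap x y with hφ
  have hφ0 : φ 0 = x := AffineMap.lineMap_apply_zero x y
  have hφ1 : φ 1 = y := AffineMap.lineMap_apply_one x y
  have hconv' : ConvexOn ℝ Set.univ (L ∘ φ) := by
    have := hconv.comp_affineMap φ
    simpa using this
  -- derivative of L ∘ φ at 0
  have hder : HasDerivAt (L ∘ φ) ⟪g x, y - x⟫ 0 := by
    have hφd : HasDerivAt (fun t : ℝ => t • (y - x) + x) (y - x) 0 := by
      simpa using (((hasDerivAt_id (0:ℝ)).smul_const (y - x)).add_const x)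
    have heq : (L ∘ φ) = fun t : ℝ => L (t • (y - x) + x) := by
      funext t
      simp only [Function.comp_apply, hφ, AffineMap.lineMap_apply_module]
      congr 1
      module
    have hF : HasFDerivAt L (InnerProductSpace.toDual ℝ E (g x)) ((0:ℝ) • (y - x) + x) := by
      simpa using (hasGradientAt_iff_hasFDerivAt.mp (hg x) : HasFDerivAt L (InnerProductSpace.toDual ℝ E (g x)) x)
    have := hF.comp_hasDerivAt 0 hφd
    rw [heq]
    simp only [InnerProductSpace.toDual_apply_apply] at this; exact this
  have hslope : ⟪g x, y - x⟫ ≤ slope (L ∘ φ) 0 1 :=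
    hconv'.le_slope_of_hasDerivAt (Set.mem_univ 0) (Set.mem_univ 1) one_pos hder
  have heval : slope (L ∘ φ) 0 1 = L y - L x := by
    simp [slope_def_field, Function.comp, hφ0, hφ1]
  rw [heval] at hslope
  have := real_inner_comm (y - x) (g x)
  linarith

/-- Key norm identity. -/
lemma key_identity {E : Type*} [NormedAddCommGroup E] [InnerProductSpace ℝ E] (a b c : E) :
    2 * ⟪a - b, c - b⟫ - ‖b - c‖ ^ 2 = ‖b - a‖ ^ 2 - ‖c - a‖ ^ 2 := by
  rw [← real_inner_self_eq_norm_sq, ← real_inner_self_eq_norm_sq, ← real_inner_self_eq_norm_sq]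
  simp only [inner_sub_left, inner_sub_right]
  linarith [real_inner_comm a b, real_inner_comm b c, real_inner_comm a c]

/-- If `x⁺` is an `ε`-inexact proximal-gradient step from `w̄` with step
size `β > 0` satisfying the majorization condition at `(x⁺, w̄)`, then for every `x`,
`f x − f x⁺ ≥ (1/(2β)) (‖x⁺ − x‖² − ‖w̄ − x‖² − ε²)`. -/
theorem pnpg_lemma1 {E : Type*} [NormedAddCommGroup E] [InnerProductSpace ℝ E]
    [FiniteDimensional ℝ E]
    (L R f : E → ℝ) (gradL : E → E)
    (hLconv : ConvexOn ℝ Set.univ L)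
    (hLgrad : ∀ x, HasGradientAt L (gradL x) x)
    (hRconv : ConvexOn ℝ Set.univ R)
    (hf : ∀ x, f x = L x + R x)
    (wbar xplus : E) (β ε : ℝ) (hβ : 0 < β) (hε : 0 ≤ ε)
    -- ε-inexact proximal-gradient step:
    -- (w̄ − β∇L(w̄) − x⁺)/β ∈ ∂_{ε²/(2β)} R(x⁺)
    (hprox : ∀ z, R z ≥ R xplus +
      ⟪z - xplus, β⁻¹ • (wbar - β • gradL wbar - xplus)⟫ - ε ^ 2 / (2 * β))
    -- majorization condition at (x⁺, w̄)
    (hmaj : L xplus ≤ L wbar + ⟪xplus - wbar, gradL wbar⟫ + ‖xplus - wbar‖ ^ 2 / (2 * β)) :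
    ∀ x : E, f x - f xplus ≥
      (1 / (2 * β)) * (‖xplus - x‖ ^ 2 - ‖wbar - x‖ ^ 2 - ε ^ 2) := by
  intro x
  have hL : L wbar + ⟪x - wbar, gradL wbar⟫ ≤ L x :=
    convex_gradient_ineq L gradL hLconv hLgrad wbar x
  have hR := hprox x
  have hβ' : β ≠ 0 := ne_of_gt hβ
  set I : ℝ := ⟪x - xplus, wbar - xplus⟫ with hI
  set J : ℝ := ⟪x - xplus, gradL wbar⟫ with hJ
  -- expand the inner product in hR
  have hinner : ⟪x - xplus, β⁻¹ • (wbar - β • gradL wbar - xplus)⟫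
      = β⁻¹ * I - J := by
    rw [real_inner_smul_right]
    rw [show wbar - β • gradL wbar - xplus = (wbar - xplus) - β • gradL wbar by abel]
    rw [inner_sub_right, real_inner_smul_right, ← hI, ← hJ]
    field_simp
  rw [hinner] at hR
  have hkey := key_identity x xplus wbar
  have hsplit : ⟪x - wbar, gradL wbar⟫ - ⟪xplus - wbar, gradL wbar⟫ = J := by
    rw [hJ, ← inner_sub_left]; congr 1; abel
  rw [hf x, hf xplus]
  have hfinal : (1 / (2 * β)) * (‖xplus - x‖ ^ 2 - ‖wbar - x‖ ^ 2 - ε ^ 2)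
      = β⁻¹ * I - ‖xplus - wbar‖ ^ 2 / (2 * β) - ε ^ 2 / (2 * β) := by
    rw [show ‖xplus - x‖ ^ 2 - ‖wbar - x‖ ^ 2 = 2 * I - ‖xplus - wbar‖ ^ 2 from hkey.symm]
    field_simp
  rw [ge_iff_le, hfinal]
  linarith
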